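/- Consider the sixteen closed spherical caps on S^3 ⊂ E^4 of radius π/6 centered at the points (±1/2, ±1/2, ±1/2, ±1/2). If C(o, r) is a closed spherical cap (o ∈ S^3, r ∈ (0, π/2)) whose interior is disjoint from the interior of each of these sixteen caps, then r ≤ π/6; moreover, if r = π/6 then o ∈ {±e_1, ±e_2, ±e_3, ±e_4}, where e_1, …, e_4 is the standard orthonormal basis of E^4. -/

import Mathlib

open scoped RealInnerProductSpace

/-- Auxiliary: if two unit vectors make an angle less than `r + π/6`, the corresponding
open caps of radii `r` and `π/6` intersect. -/
lemma exists_mem_inter_caps {E : Type*} [NormedAddCommGroup E] [InnerProductSpace ℝ E]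
    (o c : E) (ho : ‖o‖ = 1) (hc : ‖c‖ = 1) (r : ℝ) (hr0 : 0 < r) (hr2 : r < Real.pi / 2)
    (hγ : Real.cos (r + Real.pi / 6) < ⟪o, c⟫) :
    ∃ x : E, ‖x‖ = 1 ∧ Real.cos r < ⟪x, o⟫ ∧ Real.cos (Real.pi / 6) < ⟪x, c⟫ := by
  have hπ : (0:ℝ) < Real.pi := Real.pi_pos
  obtain ⟨γ, hγdef⟩ : ∃ γ : ℝ, γ = ⟪o, c⟫ := ⟨_, rfl⟩
  rw [← hγdef] at hγ
  have hγ1 : |γ| ≤ 1 := by rw [hγdef]; simpa [ho, hc] using abs_real_inner_le_norm o c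
  have hγ1' := abs_le.1 hγ1
  obtain ⟨θ, hθdef⟩ : ∃ θ : ℝ, θ = Real.arccos γ := ⟨_, rfl⟩
  have hθcos : Real.cos θ = γ := by rw [hθdef]; exact Real.cos_arccos hγ1'.1 hγ1'.2
  have hθmem : θ ∈ Set.Icc 0 Real.pi := by
    rw [hθdef]; exact ⟨Real.arccos_nonneg γ, Real.arccos_le_pi γ⟩
  have hmem : r + Real.pi / 6 ∈ Set.Icc 0 Real.pi := ⟨by linarith, by linarith⟩
  have hθlt : θ < r + Real.pi / 6 := by
    by_contra h
    push_neg at h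
    have := Real.strictAntiOn_cos.antitoneOn hmem hθmem h
    rw [hθcos] at this
    linarith
  have hoo : ⟪o, o⟫ = (1:ℝ) := by rw [real_inner_self_eq_norm_sq, ho]; norm_num
  have hcc : ⟪c, c⟫ = (1:ℝ) := by rw [real_inner_self_eq_norm_sq, hc]; norm_num
  rcases eq_or_lt_of_le hθmem.1 with h0 | h0
  · -- θ = 0, so γ = 1; take x = o
    have hγeq : γ = 1 := by rw [← hθcos, ← h0, Real.cos_zero]
    refine ⟨o, ho, ?_, ?_⟩
    · rw [hoo]
      have := Real.strictAntiOn_cos (Set.mem_Icc.2 ⟨le_refl 0, le_of_lt hπ⟩)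
        (Set.mem_Icc.2 ⟨le_of_lt hr0, by linarith⟩) hr0
      simpa using this
    · rw [← hγdef, hγeq]
      have := Real.strictAntiOn_cos (Set.mem_Icc.2 ⟨le_refl 0, le_of_lt hπ⟩)
        (Set.mem_Icc.2 ⟨by positivity, by linarith⟩) (by positivity : (0:ℝ) < Real.pi / 6)
      simpa using this
  · -- 0 < θ
    have hθπ : θ < Real.pi := by linarith
    have hsin : 0 < Real.sin θ := Real.sin_pos_of_pos_of_lt_pi h0 hθπ
    have hden : 0 < r + Real.pi / 6 := by linarith
    obtain ⟨t, htdef⟩ : ∃ t : ℝ, t = θ * r / (r + Real.pi / 6) := ⟨_, rfl⟩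
    have ht0 : 0 ≤ t := by rw [htdef]; positivity
    have htr : t < r := by
      rw [htdef, div_lt_iff₀ hden]; nlinarith
    have htθ : t ≤ θ := by
      rw [htdef, div_le_iff₀ hden]; nlinarith
    have hth6 : θ - t < Real.pi / 6 := by
      have : θ - Real.pi / 6 < t := by
        rw [htdef, lt_div_iff₀ hden]; nlinarith
      linarith
    have hsin2 : Real.sin θ ^ 2 = 1 - γ ^ 2 := by
      rw [Real.sin_sq, hθcos]
    obtain ⟨u, hudef⟩ : ∃ u : E, u = (Real.sin θ)⁻¹ • (c - γ • o) := ⟨_, rfl⟩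
    have hou : ⟪o, u⟫ = (0:ℝ) := by
      simp only [hudef, real_inner_smul_right, inner_sub_right, hoo, ← hγdef]
      ring
    have huo : ⟪u, o⟫ = (0:ℝ) := by rw [real_inner_comm]; exact hou
    have hco : ⟪c, o⟫ = γ := by rw [real_inner_comm]; exact hγdef.symm
    have huu : ⟪u, u⟫ = (1:ℝ) := by
      simp only [hudef, real_inner_smul_left, real_inner_smul_right, inner_sub_left,
        inner_sub_right, hoo, hcc, hco, ← hγdef]
      field_simp
      first
      | linear_combination hsin2
      | linear_combination -hsin2
      | linear_combination 2 * hsin2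
      | linear_combination -2 * hsin2
    have huc : ⟪u, c⟫ = Real.sin θ := by
      simp only [hudef, real_inner_smul_left, inner_sub_left, hcc, hco, ← hγdef]
      field_simp
      first
      | linear_combination hsin2
      | linear_combination -hsin2
    obtain ⟨x, hxdef⟩ : ∃ x : E, x = Real.cos t • o + Real.sin t • u := ⟨_, rfl⟩
    have hxo : ⟪x, o⟫ = Real.cos t := by
      simp only [hxdef, inner_add_left, real_inner_smul_left, hoo, huo]
      ring
    have hxc : ⟪x, c⟫ = Real.cos (θ - t) := by
      simp only [hxdef, inner_add_left, real_inner_smul_left, huc, ← hγdef]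
      rw [← hθcos, Real.cos_sub]
      ring
    have hxx : ⟪x, x⟫ = (1:ℝ) := by
      simp only [hxdef, inner_add_left, inner_add_right, real_inner_smul_left,
        real_inner_smul_right, hoo, huu, hou, huo]
      first
      | linear_combination Real.sin_sq_add_cos_sq t
      | linear_combination -Real.sin_sq_add_cos_sq t
    have hx1 : ‖x‖ = 1 := by
      have h2 : ‖x‖ ^ 2 = 1 := by rw [← real_inner_self_eq_norm_sq, hxx]
      rw [← Real.sqrt_sq (norm_nonneg x), h2, Real.sqrt_one]
    refine ⟨x, hx1, ?_, ?_⟩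
    · rw [hxo]
      exact Real.strictAntiOn_cos ⟨ht0, by linarith⟩ ⟨le_of_lt hr0, by linarith⟩ htr
    · rw [hxc]
      exact Real.strictAntiOn_cos ⟨by linarith, by linarith⟩ ⟨by positivity, by linarith⟩ hth6

/-- The point `(s₁/2, s₂/2, s₃/2, s₄/2)` in `E⁴`, for signs `s : Fin 4 → ℝ`. -/
noncomputable def fourTangentCenter (s : Fin 4 → ℝ) : EuclideanSpace ℝ (Fin 4) :=
  (2 : ℝ)⁻¹ • ∑ i, s i • EuclideanSpace.single i (1 : ℝ)

lemma fourTangentCenter_apply (s : Fin 4 → ℝ) (j : Fin 4) :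
    fourTangentCenter s j = s j / 2 := by
  have h : (∑ i, s i • EuclideanSpace.single i (1 : ℝ)) j
      = ∑ i, (s i • EuclideanSpace.single i (1 : ℝ)) j :=
    by rw [WithLp.ofLp_sum]; exact Finset.sum_apply j Finset.univ _
  simp only [fourTangentCenter, PiLp.smul_apply, h, EuclideanSpace.single_apply,
    smul_eq_mul, mul_ite, mul_one, mul_zero, Finset.sum_ite_eq, Finset.mem_univ, if_true]
  ring

lemma fourTangentCenter_norm (s : Fin 4 → ℝ) (hs : ∀ i, s i = 1 ∨ s i = -1) :
    ‖fourTangentCenter s‖ = 1 := by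
  rw [EuclideanSpace.norm_eq]
  have h : ∀ j : Fin 4, ‖fourTangentCenter s j‖ ^ 2 = 4⁻¹ := by
    intro j
    rw [fourTangentCenter_apply, Real.norm_eq_abs, sq_abs]
    rcases hs j with h | h <;> rw [h] <;> norm_num
  simp only [h]
  norm_num

/-- If a closed spherical cap `C(o, r)` on `S³ ⊂ E⁴` has interior disjoint
from the interiors of the sixteen caps of radius `π/6` centered at `(±1/2, ±1/2, ±1/2, ±1/2)`,
then `r ≤ π/6`; moreover if `r = π/6` then `o = ±eᵢ` for some standard basis vector `eᵢ`. -/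
theorem cap_packing_with_sixteen_fourTangent_caps (o : EuclideanSpace ℝ (Fin 4)) (r : ℝ)
    (ho : ‖o‖ = 1) (hr : r ∈ Set.Ioo 0 (Real.pi / 2))
    (hdisj : ∀ s : Fin 4 → ℝ, (∀ i, s i = 1 ∨ s i = -1) →
      Disjoint
        {x : EuclideanSpace ℝ (Fin 4) | ‖x‖ = 1 ∧ Real.cos r < ⟪x, o⟫}
        {x : EuclideanSpace ℝ (Fin 4) |
          ‖x‖ = 1 ∧ Real.cos (Real.pi / 6) < ⟪x, fourTangentCenter s⟫}) :
    r ≤ Real.pi / 6 ∧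
      (r = Real.pi / 6 → ∃ i : Fin 4,
        o = EuclideanSpace.single i (1 : ℝ) ∨ o = -EuclideanSpace.single i (1 : ℝ)) := by
  obtain ⟨hr0, hr2⟩ := hr
  have hπ : (0:ℝ) < Real.pi := Real.pi_pos
  -- the sign vector of o
  obtain ⟨s, hsdef⟩ : ∃ s : Fin 4 → ℝ, s = fun i => if 0 ≤ o i then 1 else -1 := ⟨_, rfl⟩
  have hs1 : ∀ i, s i = 1 ∨ s i = -1 := by
    intro i; by_cases h : 0 ≤ o i <;> simp [hsdef, h]
  have hsabs : ∀ i, o i * s i = |o i| := by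
    intro i
    by_cases h : 0 ≤ o i
    · simp [hsdef, h, abs_of_nonneg h]
    · push_neg at h
      simp [hsdef, not_le.2 h, abs_of_neg h]
  -- sum of squares is 1
  have hsum2 : ∑ j, o j ^ 2 = 1 := by
    have h := ho
    rw [EuclideanSpace.norm_eq] at h
    have h2 : ∑ j, ‖o j‖ ^ 2 = 1 := by
      have h3 := Real.sq_sqrt (Finset.sum_nonneg fun j (_ : j ∈ Finset.univ) => sq_nonneg ‖o j‖)
      rw [h] at h3
      simpa using h3.symm
    simpa [Real.norm_eq_abs, sq_abs] using h2
  -- the inner product with the chosen center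
  have hinner : ⟪o, fourTangentCenter s⟫ = (∑ j, |o j|) / 2 := by
    rw [PiLp.inner_apply]
    simp only [RCLike.inner_apply, conj_trivial, fourTangentCenter_apply]
    rw [Finset.sum_div]
    refine Finset.sum_congr rfl fun j _ => ?_
    rw [← hsabs j]
    ring
  have hA1 : 1 ≤ ∑ j, |o j| := by
    have hexp : (∑ j, |o j|) ^ 2 ≥ ∑ j, o j ^ 2 := by
      rw [Fin.sum_univ_four, Fin.sum_univ_four]
      nlinarith [abs_nonneg (o 0), abs_nonneg (o 1), abs_nonneg (o 2), abs_nonneg (o 3),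
        sq_abs (o 0), sq_abs (o 1), sq_abs (o 2), sq_abs (o 3)]
    nlinarith [Finset.sum_nonneg fun j (_ : j ∈ Finset.univ) => abs_nonneg (o j)]
  -- disjointness forces the angular separation
  have hkey : ⟪o, fourTangentCenter s⟫ ≤ Real.cos (r + Real.pi / 6) := by
    by_contra h
    push_neg at h
    obtain ⟨x, hx1, hx2, hx3⟩ := exists_mem_inter_caps o (fourTangentCenter s) ho
      (fourTangentCenter_norm s hs1) r hr0 hr2 h
    exact Set.disjoint_left.1 (hdisj s hs1) ⟨hx1, hx2⟩ ⟨hx1, hx3⟩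
  have hcos : Real.cos (Real.pi / 3) ≤ Real.cos (r + Real.pi / 6) := by
    rw [Real.cos_pi_div_three]
    rw [hinner] at hkey
    linarith
  have hle : r + Real.pi / 6 ≤ Real.pi / 3 := by
    by_contra h
    push_neg at h
    have := Real.strictAntiOn_cos (Set.mem_Icc.2 ⟨by positivity, by linarith⟩)
      (Set.mem_Icc.2 ⟨by linarith, by linarith⟩) h
    linarith
  refine ⟨by linarith, fun hreq => ?_⟩
  -- equality case
  have hAle : ∑ j, |o j| ≤ 1 := by
    have heq : Real.pi / 6 + Real.pi / 6 = Real.pi / 3 := by ring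
    rw [hinner, hreq, heq, Real.cos_pi_div_three] at hkey
    linarith
  have hAeq : ∑ j, |o j| = 1 := le_antisymm hAle hA1
  have habs_le : ∀ j, |o j| ≤ 1 := by
    intro j
    calc |o j| ≤ ∑ k, |o k| :=
          Finset.single_le_sum (fun k _ => abs_nonneg (o k)) (Finset.mem_univ j)
      _ = 1 := hAeq
  have hterm : ∀ j, |o j| = o j ^ 2 := by
    have hz : ∑ j, (|o j| - o j ^ 2) = 0 := by
      rw [Finset.sum_sub_distrib, hAeq, hsum2]; ring
    have hnn : ∀ j ∈ Finset.univ, 0 ≤ |o j| - o j ^ 2 := by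
      intro j _
      have : o j ^ 2 = |o j| * |o j| := by rw [← sq_abs]; ring
      nlinarith [abs_nonneg (o j), habs_le j]
    intro j
    have := (Finset.sum_eq_zero_iff_of_nonneg hnn).1 hz j (Finset.mem_univ j)
    linarith
  -- find the nonzero coordinate
  have hex : ∃ i, o i ≠ 0 := by
    by_contra h
    push_neg at h
    rw [Finset.sum_eq_zero (fun j _ => by rw [h j]; ring)] at hsum2
    norm_num at hsum2
  obtain ⟨i, hi⟩ := hex
  have hoi : |o i| = 1 := by
    have h1 := hterm i
    have h2 : 0 < |o i| := abs_pos.2 hi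
    nlinarith [sq_abs (o i)]
  have hzero : ∀ j, j ≠ i → o j = 0 := by
    intro j hj
    have hsub : ({i, j} : Finset (Fin 4)) ⊆ Finset.univ := Finset.subset_univ _
    have hpair : ∑ k ∈ ({i, j} : Finset (Fin 4)), |o k| = |o i| + |o j| :=
      Finset.sum_pair (Ne.symm hj)
    have hle2 : ∑ k ∈ ({i, j} : Finset (Fin 4)), |o k| ≤ ∑ k, |o k| :=
      Finset.sum_le_sum_of_subset_of_nonneg hsub (fun k _ _ => abs_nonneg (o k))
    rw [hpair, hAeq, hoi] at hle2
    have := abs_nonneg (o j)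
    have : |o j| = 0 := by linarith
    exact abs_eq_zero.1 this
  rcases abs_eq (by norm_num : (0:ℝ) ≤ 1) |>.1 hoi with h1 | h1
  · refine ⟨i, Or.inl ?_⟩
    ext j
    rw [EuclideanSpace.single_apply]
    by_cases hj : j = i
    · rw [hj, if_pos rfl, h1]
    · rw [if_neg hj, hzero j hj]
  · refine ⟨i, Or.inr ?_⟩
    ext j
    rw [PiLp.neg_apply, EuclideanSpace.single_apply]
    by_cases hj : j = i
    · rw [hj, if_pos rfl, h1]
    · rw [if_neg hj, hzero j hj, neg_zero]
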